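/- Let n be an even positive integer and let p ∈ [0,1]^n. If x is sampled from the univariate model with frequency vector p, then the probability that x is an optimum of EqualBlocksOneMax is at most exp( − Σ_{i=1}^{n} p_i · (1 − p_i) ). -/

import Mathlib

/-- The probability that the univariate model with frequency vector `p` samples
exactly the bit string `x` (bits are independent, bit `i` is `true` with
probability `p i`). -/
noncomputable def univMass {n : ℕ} (p : Fin n → ℝ) (x : Fin n → Bool) : ℝ :=
  ∏ i, if x i then p i else 1 - p i

open scoped Classical in
/-- The probability that a sample from the univariate model with frequency
vector `p` satisfies the predicate `A`. -/
noncomputable def univPr {n : ℕ} (p : Fin n → ℝ) (A : (Fin n → Bool) → Prop) : ℝ :=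
  ∑ x : Fin n → Bool, if A x then univMass p x else 0

/-- `x` is an optimum of EqualBlocksOneMax on bit strings of length `2 * m`:
every block (pair of positions `2j` and `2j+1`, zero-based) has two equal bits. -/
def IsEBOMOptimum (m : ℕ) (x : Fin (2 * m) → Bool) : Prop :=
  ∀ j : Fin m,
    x ⟨2 * j.1, by have := j.2; omega⟩ = x ⟨2 * j.1 + 1, by have := j.2; omega⟩



@[to_additive]
lemma prod_range_double' {M : Type*} [CommMonoid M] (f : ℕ → M) (m : ℕ) :
    ∏ i ∈ Finset.range (2 * m), f i
      = ∏ j ∈ Finset.range m, (f (2 * j) * f (2 * j + 1)) := by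
  induction m with
  | zero => simp
  | succ k ih =>
    rw [show 2 * (k + 1) = (2 * k + 1) + 1 by ring, Finset.prod_range_succ,
      Finset.prod_range_succ, Finset.prod_range_succ, ih, mul_assoc]

@[to_additive]
lemma prod_fin_double' {M : Type*} [CommMonoid M] (m : ℕ) (f : Fin (2 * m) → M) :
    ∏ i, f i = ∏ j : Fin m,
      (f ⟨2 * j.1, by have := j.2; omega⟩ * f ⟨2 * j.1 + 1, by have := j.2; omega⟩) := by
  classical
  set F : ℕ → M := fun i => if h : i < 2 * m then f ⟨i, h⟩ else 1 with hF
  have h1 : ∏ i, f i = ∏ i ∈ Finset.range (2 * m), F i := by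
    rw [← Fin.prod_univ_eq_prod_range]
    refine Finset.prod_congr rfl fun i _ => ?_
    simp [hF, i.2]
  have h2 : ∏ j ∈ Finset.range m, (F (2 * j) * F (2 * j + 1))
      = ∏ j : Fin m, (f ⟨2 * j.1, by have := j.2; omega⟩ * f ⟨2 * j.1 + 1, by have := j.2; omega⟩) := by
    rw [← Fin.prod_univ_eq_prod_range (fun j => F (2 * j) * F (2 * j + 1)) m]
    refine Finset.prod_congr rfl fun j _ => ?_
    have hj1 : 2 * j.1 < 2 * m := by have := j.2; omega
    have hj2 : 2 * j.1 + 1 < 2 * m := by have := j.2; omega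
    simp [hF, hj1, hj2]
  rw [h1, prod_range_double', h2]



theorem univPr_optimum_le_exp_sum_p
    (m : ℕ) (hm : 0 < m)
    (p : Fin (2 * m) → ℝ) (hp : ∀ i, p i ∈ Set.Icc (0 : ℝ) 1) :
    univPr p (IsEBOMOptimum m) ≤ Real.exp (-∑ i, p i * (1 - p i)) := by
  classical
  set a : Fin m → Fin (2 * m) := fun j => ⟨2 * j.1, by have := j.2; omega⟩ with ha
  set b : Fin m → Fin (2 * m) := fun j => ⟨2 * j.1 + 1, by have := j.2; omega⟩ with hb
  set emb : (Fin m → Bool) → (Fin (2 * m) → Bool) :=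
    fun y i => y ⟨i.1 / 2, by have := i.2; omega⟩ with hemb
  -- Step A: restrict the sum to strings constant on blocks
  have hA : univPr p (IsEBOMOptimum m) = ∑ y : Fin m → Bool, univMass p (emb y) := by
    rw [univPr, ← Finset.sum_filter]
    have hleft : ∀ x ∈ Finset.filter (fun z => IsEBOMOptimum m z) Finset.univ,
        emb (fun j => x (a j)) = x := by
      intro x hx
      simp only [Finset.mem_filter, Finset.mem_univ, true_and] at hx
      funext i
      simp only [hemb, ha]
      by_cases h : i.1 % 2 = 0
      · congr 1; apply Fin.ext; simp; try omega
      · have := hx ⟨i.1 / 2, by have := i.2; omega⟩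
        rw [this]
        congr 1
        apply Fin.ext
        simp
        try omega
    refine Finset.sum_nbij' (i := fun x => fun j : Fin m => x (a j)) (j := emb)
      ?_ ?_ ?_ ?_ ?_
    · intro x hx
      exact Finset.mem_univ _
    · intro y hy
      simp only [Finset.mem_filter, Finset.mem_univ, true_and]
      intro j
      simp only [hemb]
      congr 1
      apply Fin.ext
      simp
      try omega
    · intro x hx
      exact hleft x hx
    · intro y hy
      funext j
      simp only [hemb, ha]
      congr 1
      apply Fin.ext
      simp
      try omega
    · intro x hx
      rw [hleft x hx]
  -- Step B: mass of a block-constant string factors over blocks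
  have hB : ∀ y : Fin m → Bool, univMass p (emb y)
      = ∏ j : Fin m, (if y j then p (a j) * p (b j) else (1 - p (a j)) * (1 - p (b j))) := by
    intro y
    rw [univMass, prod_fin_double']
    refine Finset.prod_congr rfl fun j _ => ?_
    have h1 : emb y ⟨2 * j.1, by have := j.2; omega⟩ = y j := by
      simp only [hemb]; congr 1; apply Fin.ext; simp; try omega
    have h2 : emb y ⟨2 * j.1 + 1, by have := j.2; omega⟩ = y j := by
      simp only [hemb]; congr 1; apply Fin.ext; simp; try omega
    rw [h1, h2]
    cases y j <;> simp [ha, hb]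
  -- Step C: sum over y factors as a product
  have hC : ∑ y : Fin m → Bool,
        ∏ j : Fin m, (if y j then p (a j) * p (b j) else (1 - p (a j)) * (1 - p (b j)))
      = ∏ j : Fin m, (p (a j) * p (b j) + (1 - p (a j)) * (1 - p (b j))) := by
    have := Finset.prod_univ_sum (t := fun _ : Fin m => (Finset.univ : Finset Bool))
      (f := fun j bb => if bb then p (a j) * p (b j) else (1 - p (a j)) * (1 - p (b j)))
    rw [Fintype.piFinset_univ] at this
    rw [← this]
    refine Finset.prod_congr rfl fun j _ => ?_
    simp [Fintype.sum_bool]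
  rw [hA]
  simp_rw [hB]
  rw [hC]
  -- Step D: bound the product
  have hsum : (∑ i, p i * (1 - p i))
      = ∑ j : Fin m, (p (a j) * (1 - p (a j)) + p (b j) * (1 - p (b j))) := by
    exact sum_fin_double' m (fun i => p i * (1 - p i))
  rw [hsum, ← Finset.sum_neg_distrib, Real.exp_sum]
  refine Finset.prod_le_prod ?_ ?_
  · intro j _
    have h1 := hp (a j); have h2 := hp (b j)
    simp only [Set.mem_Icc] at h1 h2
    nlinarith [h1.1, h1.2, h2.1, h2.2]
  · intro j _
    have h1 := hp (a j); have h2 := hp (b j)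
    simp only [Set.mem_Icc] at h1 h2
    have hexp := Real.add_one_le_exp
      (-(p (a j) * (1 - p (a j)) + p (b j) * (1 - p (b j))))
    nlinarith [sq_nonneg (p (a j) - p (b j))]
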